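/- arXiv:0704.2372 — 2 statements merged into one kernel-verified Lean document; each statement's English description precedes it below -/
import Mathlib

section
/- Let $d \ge 3$, $m \in (0,1)$ and $0 < D_1 < D_0$. The difference $V_{D_1} - V_{D_0}$ belongs to $L^p(\mathbb{R}^d)$ if and only if $p > p(m) := \frac{d(1-m)}{2(2-m)}$. In particular, $V_{D_1} - V_{D_0}$ is Lebesgue integrable on $\mathbb{R}^d$ if and only if $m > m_* := \frac{d-4}{d-2}$. -/
open MeasureTheory Real Filter
noncomputable section

open Metric
open scoped ENNReal NNReal

/-- Barenblatt profile. -/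
def V (d : ℕ) (m D : ℝ) (x : EuclideanSpace ℝ (Fin d)) : ℝ :=
  (D + (1 - m) / (2 * m) * ‖x‖ ^ 2) ^ (-(1 / (1 - m)) : ℝ)

lemma not_integrable_one_add_norm (d : ℕ) (hd : 1 ≤ d) {r : ℝ} (hr0 : 0 ≤ r)
    (hrd : r ≤ (d : ℝ)) :
    ¬ Integrable (fun x : EuclideanSpace ℝ (Fin d) => (1 + ‖x‖) ^ (-r)) := by
  intro hint
  set E := EuclideanSpace ℝ (Fin d)
  set B : ℝ≥0∞ := volume (ball (0 : E) 1) with hB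
  have hdim : Module.finrank ℝ E = d := finrank_euclideanSpace_fin
  have hBpos : 0 < B := measure_ball_pos _ _ one_pos
  have hBtop : B ≠ ⊤ := measure_ball_lt_top.ne
  set A : ℕ → Set E := fun n => closedBall (0 : E) (2 ^ ((n : ℝ) + 1)) \
      closedBall (0 : E) (2 ^ (n : ℝ)) with hA
  have hmeas : ∀ n, MeasurableSet (A n) :=
    fun n => measurableSet_closedBall.diff measurableSet_closedBall
  have hsub : ∀ n, A n ⊆ closedBall (0 : E) (2 ^ ((n : ℝ) + 1)) := fun n => Set.diff_subset
  have hdisj : Pairwise (Function.onFun Disjoint A) := by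
    have key : ∀ i j : ℕ, i < j → Disjoint (A i) (A j) := by
      intro i j hij
      have h1 : A i ⊆ closedBall (0 : E) (2 ^ ((i : ℝ) + 1)) := hsub i
      have h2 : A j ⊆ (closedBall (0 : E) (2 ^ (j : ℝ)))ᶜ := fun x hx => hx.2
      have h3 : closedBall (0 : E) (2 ^ ((i : ℝ) + 1)) ⊆ closedBall (0 : E) (2 ^ (j : ℝ)) := by
        apply closedBall_subset_closedBall
        apply Real.rpow_le_rpow_of_exponent_le one_le_two
        have : (i : ℝ) + 1 ≤ (j : ℝ) := by exact_mod_cast hij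
        linarith
      exact (disjoint_compl_right.mono h3 le_rfl).mono h1 h2
    intro i j hij
    rcases lt_or_gt_of_ne hij with h | h
    · exact key i j h
    · exact (key j i h).symm
  have hvol : ∀ n : ℕ, volume (A n) =
      ENNReal.ofReal ((2 : ℝ) ^ (((n : ℝ) + 1) * d) - 2 ^ ((n : ℝ) * d)) * B := by
    intro n
    have hle : closedBall (0 : E) (2 ^ (n : ℝ)) ⊆ closedBall (0 : E) (2 ^ ((n : ℝ) + 1)) := by
      apply closedBall_subset_closedBall
      apply Real.rpow_le_rpow_of_exponent_le one_le_two (by linarith)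
    have hcb : ∀ t : ℝ, volume (closedBall (0 : E) ((2:ℝ) ^ t)) =
        ENNReal.ofReal ((2 : ℝ) ^ (t * d)) * B := by
      intro t
      rw [Measure.addHaar_closedBall _ _ (by positivity), hdim, ← Real.rpow_natCast ((2:ℝ)^t) d,
        ← Real.rpow_mul (by norm_num)]
    rw [hA]
    rw [measure_diff hle measurableSet_closedBall.nullMeasurableSet
      (measure_closedBall_lt_top).ne, hcb, hcb,
      ← ENNReal.sub_mul (fun _ _ => hBtop), ← ENNReal.ofReal_sub _ (by positivity)]
  set C : ℝ≥0∞ := ENNReal.ofReal ((2 : ℝ) ^ (-(2 * r)) * (2 ^ (d : ℝ) - 1)) * B with hC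
  have h2d : (1:ℝ) < 2 ^ (d : ℝ) := by
    apply Real.one_lt_rpow_iff_of_pos (by norm_num) |>.mpr
    exact Or.inl ⟨one_lt_two, by exact_mod_cast Nat.pos_of_ne_zero (by omega)⟩
  have hCne : C ≠ 0 := by
    apply mul_ne_zero _ hBpos.ne'
    have hp : (0:ℝ) < 2 ^ (-(2*r)) := Real.rpow_pos_of_pos two_pos _
    exact (ENNReal.ofReal_pos.mpr (by nlinarith)).ne'
  have hlow : ∀ n : ℕ, C ≤ ∫⁻ x in A n, ENNReal.ofReal ((1 + ‖x‖) ^ (-r)) := by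
    intro n
    have step1 : ∀ x ∈ A n, ENNReal.ofReal ((2:ℝ) ^ (-(((n:ℝ) + 2) * r)))
        ≤ ENNReal.ofReal ((1 + ‖x‖) ^ (-r)) := by
      intro x hx
      apply ENNReal.ofReal_le_ofReal
      have hxle : ‖x‖ ≤ 2 ^ ((n : ℝ) + 1) := by
        have := (hsub n hx)
        simpa [dist_eq_norm] using mem_closedBall.mp this
      have h1x : 1 + ‖x‖ ≤ 2 ^ ((n:ℝ) + 2) := by
        have h21 : (1:ℝ) ≤ 2 ^ ((n:ℝ) + 1) := Real.one_le_rpow one_le_two (by positivity)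
        have : (2:ℝ) ^ ((n:ℝ) + 2) = 2 * 2 ^ ((n:ℝ)+1) := by
          rw [← Real.rpow_one_add' (by norm_num) (by positivity)]; ring_nf
        linarith
      calc (2:ℝ) ^ (-(((n:ℝ)+2) * r)) = ((2:ℝ) ^ ((n:ℝ)+2)) ^ (-r) := by
            rw [← Real.rpow_mul (by norm_num : (0:ℝ) ≤ 2), mul_neg]
        _ ≤ (1 + ‖x‖) ^ (-r) :=
            Real.rpow_le_rpow_of_nonpos (by positivity) h1x (by linarith)
    calc C ≤ ENNReal.ofReal ((2:ℝ) ^ (-(((n:ℝ) + 2) * r))) * volume (A n) := by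
          rw [hvol n, hC, ← mul_assoc, ← ENNReal.ofReal_mul (by positivity)]
          apply mul_le_mul_left (ENNReal.ofReal_le_ofReal _)
          have e1 : (2:ℝ) ^ (((n:ℝ)+1) * d) - 2 ^ ((n:ℝ) * d)
              = 2 ^ ((n:ℝ) * d) * (2 ^ (d:ℝ) - 1) := by
            rw [mul_sub, ← Real.rpow_add two_pos, mul_one]; ring_nf
          rw [e1, ← mul_assoc]
          have e2 : (2:ℝ) ^ (-(((n:ℝ)+2) * r)) * 2 ^ ((n:ℝ) * d)
              = 2 ^ ((n:ℝ) * (d - r)) * 2 ^ (-(2*r)) := by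
            rw [← Real.rpow_add two_pos, ← Real.rpow_add two_pos]; ring_nf
          rw [e2]
          have e3 : (1:ℝ) ≤ 2 ^ ((n:ℝ) * (d - r)) :=
            Real.one_le_rpow one_le_two (mul_nonneg (Nat.cast_nonneg n) (by linarith))
          nlinarith [mul_le_mul_of_nonneg_right e3
            (mul_nonneg (Real.rpow_pos_of_pos two_pos _).le (by linarith) :
              (0:ℝ) ≤ 2 ^ (-(2*r)) * (2 ^ (d:ℝ) - 1))]
      _ ≤ ∫⁻ x in A n, ENNReal.ofReal ((1 + ‖x‖) ^ (-r)) := by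
          rw [← setLIntegral_const (A n) _]
          exact setLIntegral_mono' (hmeas n) step1
  have htop : (⊤ : ℝ≥0∞) ≤ ∫⁻ x : E, ENNReal.ofReal ((1 + ‖x‖) ^ (-r)) := by
    calc (⊤ : ℝ≥0∞) = ∑' _ : ℕ, C := (ENNReal.tsum_const_eq_top_of_ne_zero hCne).symm
      _ ≤ ∑' n, ∫⁻ x in A n, ENNReal.ofReal ((1 + ‖x‖) ^ (-r)) := ENNReal.tsum_le_tsum hlow
      _ = ∫⁻ x in ⋃ n, A n, ENNReal.ofReal ((1 + ‖x‖) ^ (-r)) := (lintegral_iUnion hmeas hdisj _).symm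
      _ ≤ ∫⁻ x : E, ENNReal.ofReal ((1 + ‖x‖) ^ (-r)) := setLIntegral_le_lintegral _ _
  exact absurd (hint.lintegral_lt_top) (not_lt.mpr htop)

lemma integrable_iff_of_bounds (d : ℕ) (hd : 1 ≤ d) {f : EuclideanSpace ℝ (Fin d) → ℝ}
    (hf : AEStronglyMeasurable f volume) {r c₁ c₂ : ℝ} (hr : 0 ≤ r) (hc₁ : 0 < c₁)
    (h₁ : ∀ x, c₁ * (1 + ‖x‖) ^ (-r) ≤ f x) (h₂ : ∀ x, f x ≤ c₂ * (1 + ‖x‖) ^ (-r)) :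
    Integrable f ↔ (d : ℝ) < r := by
  constructor
  · intro hint
    by_contra hle
    push_neg at hle
    apply not_integrable_one_add_norm d hd hr hle
    have hint' : Integrable (fun x : EuclideanSpace ℝ (Fin d) => c₁⁻¹ * f x) :=
      hint.const_mul _
    apply hint'.mono' ((continuous_const.add continuous_norm).rpow_const
      (fun x => Or.inl (ne_of_gt (add_pos_of_pos_of_nonneg one_pos (norm_nonneg x))))).aestronglyMeasurable
    filter_upwards with x
    show ‖(1 + ‖x‖) ^ (-r)‖ ≤ c₁⁻¹ * f x
    rw [Real.norm_eq_abs, abs_of_pos (Real.rpow_pos_of_pos (add_pos_of_pos_of_nonneg one_pos (norm_nonneg x)) _)]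
    calc (1 + ‖x‖) ^ (-r) = c₁⁻¹ * (c₁ * (1 + ‖x‖) ^ (-r)) := by field_simp
      _ ≤ c₁⁻¹ * f x := mul_le_mul_of_nonneg_left (h₁ x) (inv_nonneg.mpr hc₁.le)
  · intro hlt
    have hbase : Integrable (fun x : EuclideanSpace ℝ (Fin d) => (1 + ‖x‖) ^ (-r)) volume := by
      apply integrable_one_add_norm
      rwa [finrank_euclideanSpace_fin]
    apply (hbase.const_mul c₂).mono' hf
    filter_upwards with x
    rw [Real.norm_eq_abs, abs_of_nonneg (le_trans (by positivity) (h₁ x))]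
    exact h₂ x

lemma V_diff_bounds (d : ℕ) {m D0 D1 : ℝ} (hm0 : 0 < m) (hm1 : m < 1) (hD1 : 0 < D1)
    (hD : D1 < D0) :
    ∃ c₁ c₂ : ℝ, 0 < c₁ ∧ ∀ x : EuclideanSpace ℝ (Fin d),
      c₁ * (1 + ‖x‖) ^ (-(2 * (2 - m) / (1 - m)))
        ≤ (D1 + (1 - m) / (2 * m) * ‖x‖ ^ 2) ^ (-(1 / (1 - m)) : ℝ)
          - (D0 + (1 - m) / (2 * m) * ‖x‖ ^ 2) ^ (-(1 / (1 - m)) : ℝ) ∧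
      (D1 + (1 - m) / (2 * m) * ‖x‖ ^ 2) ^ (-(1 / (1 - m)) : ℝ)
          - (D0 + (1 - m) / (2 * m) * ‖x‖ ^ 2) ^ (-(1 / (1 - m)) : ℝ)
        ≤ c₂ * (1 + ‖x‖) ^ (-(2 * (2 - m) / (1 - m))) := by
  have h1m : (0:ℝ) < 1 - m := by linarith
  set α : ℝ := 1 / (1 - m) with hα
  have hαpos : 0 < α := by positivity
  set c : ℝ := (1 - m) / (2 * m) with hc
  have hcpos : 0 < c := by positivity
  set k : ℝ := min D1 c / 2 with hk
  have hkpos : 0 < k := by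
    have := lt_min hD1 hcpos
    positivity
  set K : ℝ := max D0 c with hK
  have hKpos : 0 < K := lt_of_lt_of_le (hD1.trans hD) (le_max_left _ _)
  set e : ℝ := -α - 1 with he
  have hepos : e ≤ 0 := by linarith
  have hδ : 0 < D0 - D1 := by linarith
  refine ⟨α * (D0 - D1) * K ^ e, α * (D0 - D1) * k ^ e,
    mul_pos (mul_pos hαpos hδ) (Real.rpow_pos_of_pos hKpos _), fun x => ?_⟩
  set r : ℝ := ‖x‖ with hr
  have hr0 : 0 ≤ r := norm_nonneg x
  set a : ℝ := D1 + c * r ^ 2 with ha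
  set b : ℝ := D0 + c * r ^ 2 with hb
  have hapos : 0 < a := by positivity
  have hab : a < b := by simp only [ha, hb]; nlinarith
  have hbpos : 0 < b := hapos.trans hab
  -- mean value theorem
  obtain ⟨ξ, hξ, hslope⟩ := exists_hasDerivAt_eq_slope (fun u : ℝ => u ^ (-α : ℝ))
    (fun u : ℝ => (-α) * u ^ (-α - 1 : ℝ)) hab
    (fun u hu => (Real.continuousAt_rpow_const u _
      (Or.inl (ne_of_gt (lt_of_lt_of_le hapos hu.1)))).continuousWithinAt)
    (fun u hu => Real.hasDerivAt_rpow_const (Or.inl (ne_of_gt (hapos.trans hu.1))))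
  have hξa : a < ξ := hξ.1
  have hξb : ξ < b := hξ.2
  rw [eq_div_iff (by linarith : b - a ≠ 0)] at hslope
  have hfx : a ^ (-α : ℝ) - b ^ (-α : ℝ) = α * (D0 - D1) * ξ ^ e := by
    have hba : b - a = D0 - D1 := by simp only [ha, hb]; ring
    rw [he, ← hba]
    linear_combination hslope
  -- comparison of a, b with (1+r)^2
  have hak : k * (1 + r) ^ 2 ≤ a := by
    simp only [ha, hk]
    nlinarith [min_le_left D1 c, min_le_right D1 c, sq_nonneg (1 - r), lt_min hD1 hcpos]
  have hbK : b ≤ K * (1 + r) ^ 2 := by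
    simp only [hb, hK]
    nlinarith [le_max_left D0 c, le_max_right D0 c, hKpos]
  have hsq : ∀ q : ℝ, 0 < q → (q * (1 + r) ^ 2) ^ e = q ^ e * (1 + r) ^ (-(2 * (2 - m) / (1 - m))) := by
    intro q hq
    rw [Real.mul_rpow hq.le (by positivity), ← Real.rpow_natCast (1 + r) 2,
      ← Real.rpow_mul (by positivity)]
    congr 1
    push_cast
    rw [he, hα]
    field_simp
    ring
  have hup : ξ ^ e ≤ k ^ e * (1 + r) ^ (-(2 * (2 - m) / (1 - m))) := by
    rw [← hsq k hkpos]
    calc ξ ^ e ≤ a ^ e := Real.rpow_le_rpow_of_nonpos hapos hξa.le hepos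
      _ ≤ (k * (1 + r) ^ 2) ^ e := Real.rpow_le_rpow_of_nonpos (by positivity) hak hepos
  have hlo : K ^ e * (1 + r) ^ (-(2 * (2 - m) / (1 - m))) ≤ ξ ^ e := by
    rw [← hsq K hKpos]
    calc (K * (1 + r) ^ 2) ^ e ≤ b ^ e := Real.rpow_le_rpow_of_nonpos hbpos hbK hepos
      _ ≤ ξ ^ e := Real.rpow_le_rpow_of_nonpos (hapos.trans hξa) hξb.le hepos
  have hfx' : (D1 + (1 - m) / (2 * m) * ‖x‖ ^ 2) ^ (-(1 / (1 - m)) : ℝ)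
      - (D0 + (1 - m) / (2 * m) * ‖x‖ ^ 2) ^ (-(1 / (1 - m)) : ℝ)
      = α * (D0 - D1) * ξ ^ e := hfx
  rw [hfx']
  have hαδ : 0 ≤ α * (D0 - D1) := (mul_pos hαpos hδ).le
  constructor
  · calc α * (D0 - D1) * K ^ e * (1 + r) ^ (-(2 * (2 - m) / (1 - m)))
        = α * (D0 - D1) * (K ^ e * (1 + r) ^ (-(2 * (2 - m) / (1 - m)))) := by ring
      _ ≤ α * (D0 - D1) * ξ ^ e := mul_le_mul_of_nonneg_left hlo hαδ
  · calc α * (D0 - D1) * ξ ^ e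
        ≤ α * (D0 - D1) * (k ^ e * (1 + r) ^ (-(2 * (2 - m) / (1 - m)))) :=
          mul_le_mul_of_nonneg_left hup hαδ
      _ = α * (D0 - D1) * k ^ e * (1 + r) ^ (-(2 * (2 - m) / (1 - m))) := by ring

theorem barenblatt_difference_Lp_iff (d : ℕ) (hd : 3 ≤ d) (m D0 D1 : ℝ) (hm0 : 0 < m)
    (hm1 : m < 1) (hD1 : 0 < D1) (hD : D1 < D0) :
    (∀ p : ℝ, 0 < p →
      (MemLp (fun x : EuclideanSpace ℝ (Fin d) => V d m D1 x - V d m D0 x)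
          (ENNReal.ofReal p) volume ↔ (d : ℝ) * (1 - m) / (2 * (2 - m)) < p)) ∧
    (Integrable (fun x : EuclideanSpace ℝ (Fin d) => V d m D1 x - V d m D0 x) ↔
      ((d : ℝ) - 4) / ((d : ℝ) - 2) < m) := by
  have hd3 : (3:ℝ) ≤ (d:ℝ) := by exact_mod_cast hd
  have h1m : (0:ℝ) < 1 - m := by linarith
  have h2m : (0:ℝ) < 2 - m := by linarith
  have hcpos : (0:ℝ) < (1 - m) / (2 * m) := by positivity
  set f : EuclideanSpace ℝ (Fin d) → ℝ := fun x => V d m D1 x - V d m D0 x with hf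
  set s : ℝ := 2 * (2 - m) / (1 - m) with hs
  have hspos : 0 < s := by positivity
  obtain ⟨c₁, c₂, hc₁, hbd⟩ := V_diff_bounds d hm0 hm1 hD1 hD
  have hbd1 : ∀ x, c₁ * (1 + ‖x‖) ^ (-s) ≤ f x := fun x => (hbd x).1
  have hbd2 : ∀ x, f x ≤ c₂ * (1 + ‖x‖) ^ (-s) := fun x => (hbd x).2
  have hfpos : ∀ x, 0 < f x := fun x =>
    lt_of_lt_of_le (by positivity) (hbd1 x)
  have hVcont : ∀ D : ℝ, 0 < D → Continuous (fun x : EuclideanSpace ℝ (Fin d) => V d m D x) := by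
    intro D hDpos
    apply Continuous.rpow_const
    · exact continuous_const.add (continuous_const.mul (continuous_norm.pow 2))
    · intro x
      left
      have : 0 ≤ (1 - m) / (2 * m) * ‖x‖ ^ 2 := by positivity
      nlinarith
  have hfcont : Continuous f :=
    (hVcont D1 hD1).sub (hVcont D0 (hD1.trans hD))
  -- main Lp characterization
  have key : ∀ p : ℝ, 0 < p →
      (MemLp f (ENNReal.ofReal p) volume ↔ (d : ℝ) * (1 - m) / (2 * (2 - m)) < p) := by
    intro p hp
    have hq0 : ENNReal.ofReal p ≠ 0 := by
      simpa [ENNReal.ofReal_eq_zero, not_le] using hp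
    have hqt : ENNReal.ofReal p ≠ ⊤ := ENNReal.ofReal_ne_top
    have hmemiff : MemLp f (ENNReal.ofReal p) volume ↔
        Integrable (fun x => ‖f x‖ ^ p) volume := by
      rw [← memLp_one_iff_integrable]
      have h1 : ENNReal.ofReal p / ENNReal.ofReal p = 1 := ENNReal.div_self hq0 hqt
      have h2 : MemLp (fun x => ‖f x‖ ^ (ENNReal.ofReal p).toReal)
          (ENNReal.ofReal p / ENNReal.ofReal p) volume ↔ MemLp f (ENNReal.ofReal p) volume :=
        memLp_norm_rpow_iff hfcont.aestronglyMeasurable hq0 hqt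
      rw [h1, ENNReal.toReal_ofReal hp.le] at h2
      exact h2.symm
    rw [hmemiff]
    have hintiff : Integrable (fun x => ‖f x‖ ^ p) volume ↔ (d:ℝ) < s * p := by
      apply integrable_iff_of_bounds d (by omega) (r := s * p) (c₁ := c₁ ^ p) (c₂ := c₂ ^ p)
      · exact ((hfcont.norm).rpow_const (fun x => Or.inr hp.le)).aestronglyMeasurable
      · positivity
      · positivity
      · intro x
        have hcalc : (c₁ * (1 + ‖x‖) ^ (-s)) ^ p = c₁ ^ p * (1 + ‖x‖) ^ (-(s * p)) := by
          rw [Real.mul_rpow hc₁.le (by positivity), ← Real.rpow_mul (by positivity)]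
          ring_nf
        rw [← hcalc, Real.norm_eq_abs, abs_of_pos (hfpos x)]
        exact Real.rpow_le_rpow (by positivity) (hbd1 x) hp.le
      · intro x
        have hc₂pos : 0 < c₂ := by
          have := lt_of_lt_of_le (hfpos 0) (hbd2 0)
          nlinarith [Real.rpow_pos_of_pos (by norm_num : (0:ℝ) < 1 + ‖(0:EuclideanSpace ℝ (Fin d))‖) (-s)]
        have hcalc : (c₂ * (1 + ‖x‖) ^ (-s)) ^ p = c₂ ^ p * (1 + ‖x‖) ^ (-(s * p)) := by
          rw [Real.mul_rpow hc₂pos.le (by positivity), ← Real.rpow_mul (by positivity)]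
          ring_nf
        rw [← hcalc, Real.norm_eq_abs, abs_of_pos (hfpos x)]
        exact Real.rpow_le_rpow (hfpos x).le (hbd2 x) hp.le
    rw [hintiff]
    rw [hs, div_lt_iff₀ (by positivity : (0:ℝ) < 2 * (2 - m))]
    have hsp : 2 * (2 - m) / (1 - m) * p * (1 - m) = 2 * (2 - m) * p := by
      field_simp
    rw [← mul_lt_mul_iff_of_pos_right h1m, hsp]
    constructor <;> intro <;> linarith
  refine ⟨key, ?_⟩
  have := key 1 one_pos
  rw [ENNReal.ofReal_one] at this
  rw [← memLp_one_iff_integrable, this, div_lt_one (by positivity : (0:ℝ) < 2 * (2 - m)),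
    div_lt_iff₀ (by linarith : (0:ℝ) < (d:ℝ) - 2)]
  constructor <;> intro h <;> nlinarith
end
end

section
/- Let $d \ge 5$, $0 < m < m_* = \frac{d-4}{d-2}$ and $D > 0$. Then for all $x \in \mathbb{R}^d$, $\frac{|\Delta V_D(x)|}{V_D(x)^{2-m}} \ge \frac{(d-2)(m_*-m)}{m(1-m)}$ and $\frac{|\nabla V_D(x)|^2}{|\Delta V_D(x)|\, V_D(x)} \le \frac{2}{(d-2)(m_*-m)}$. -/
set_option maxHeartbeats 1000000

open MeasureTheory Real Filter
noncomputable section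

/-- Laplacian as sum of second partial derivatives. -/
def lap (d : ℕ) (f : EuclideanSpace ℝ (Fin d) → ℝ) (x : EuclideanSpace ℝ (Fin d)) : ℝ :=
  ∑ i : Fin d, fderiv ℝ (fun y => fderiv ℝ f y (EuclideanSpace.single i 1)) x
    (EuclideanSpace.single i 1)

theorem barenblatt_weight_estimates (d : ℕ) (hd : 5 ≤ d) (m D : ℝ) (hm0 : 0 < m)
    (hm : m < ((d : ℝ) - 4) / ((d : ℝ) - 2)) (hD : 0 < D) (x : EuclideanSpace ℝ (Fin d)) :
    ((d : ℝ) - 2) * (((d : ℝ) - 4) / ((d : ℝ) - 2) - m) / (m * (1 - m)) ≤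
      |lap d (V d m D) x| / V d m D x ^ (2 - m : ℝ) ∧
    ‖gradient (V d m D) x‖ ^ 2 / (|lap d (V d m D) x| * V d m D x) ≤
      2 / (((d : ℝ) - 2) * (((d : ℝ) - 4) / ((d : ℝ) - 2) - m)) := by
  have hdR : (5:ℝ) ≤ (d:ℝ) := by exact_mod_cast hd
  have hd2 : (0:ℝ) < (d:ℝ) - 2 := by linarith
  have hm1 : m < 1 := by
    have h : ((d:ℝ) - 4) / ((d:ℝ) - 2) < 1 := by rw [div_lt_one hd2]; linarith
    linarith
  have h1m : 0 < 1 - m := by linarith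
  set c : ℝ := (1 - m) / (2 * m) with hc_def
  set p : ℝ := 1 / (1 - m) with hp_def
  have hc : 0 < c := by rw [hc_def]; positivity
  have hp : 0 < p := by rw [hp_def]; positivity
  have hpm : p * (1 - m) = 1 := by rw [hp_def]; field_simp
  have h2pc : 2 * p * c = 1 / m := by rw [hp_def, hc_def]; field_simp
  have h2mcp : 2 * m * c * p = 1 := by rw [hp_def, hc_def]; field_simp
  set K : ℝ := ((d:ℝ) - 2) * (((d:ℝ) - 4) / ((d:ℝ) - 2) - m) with hK_def
  have hKeq : K = (d:ℝ) - 4 - m * ((d:ℝ) - 2) := by rw [hK_def]; field_simp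
  have hK : 0 < K := by rw [hK_def]; exact mul_pos hd2 (by linarith)
  have hB : ∀ y : EuclideanSpace ℝ (Fin d), (0:ℝ) < D + c * ‖y‖ ^ 2 := by
    intro y; have : (0:ℝ) ≤ c * ‖y‖ ^ 2 := by positivity
    linarith
  have hVeq : ∀ y : EuclideanSpace ℝ (Fin d), V d m D y = (D + c * ‖y‖ ^ 2) ^ (-p) := by
    intro y; simp only [V, hc_def, hp_def]
  have hBd : ∀ y : EuclideanSpace ℝ (Fin d),
      HasFDerivAt (fun z : EuclideanSpace ℝ (Fin d) => D + c * ‖z‖ ^ 2)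
        ((c * 2) • innerSL ℝ y) y := by
    intro y
    have h := ((hasStrictFDerivAt_norm_sq y).hasFDerivAt.const_mul c).const_add D
    refine h.congr_fderiv ?_
    ext v
    simp [smul_smul]
    ring
  have hVd : ∀ y : EuclideanSpace ℝ (Fin d),
      HasFDerivAt (V d m D) ((-p * (D + c * ‖y‖ ^ 2) ^ (-p - 1) * (c * 2)) • innerSL ℝ y) y := by
    intro y
    have h := (hBd y).rpow_const (p := -p) (Or.inl (hB y).ne')
    rw [smul_smul] at h
    have he : (fun z : EuclideanSpace ℝ (Fin d) => (D + c * ‖z‖ ^ 2) ^ (-p)) = V d m D := by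
      funext z; rw [hVeq z]
    rw [he] at h
    exact h
  have hGi : ∀ i : Fin d, (fun y => fderiv ℝ (V d m D) y (EuclideanSpace.single i 1))
      = fun y : EuclideanSpace ℝ (Fin d) =>
        (-p * (D + c * ‖y‖ ^ 2) ^ (-p - 1) * (c * 2)) * y i := by
    intro i; funext y
    rw [(hVd y).fderiv]
    rw [ContinuousLinearMap.smul_apply, innerSL_apply_apply, EuclideanSpace.inner_single_right]
    simp
  have hpart : ∀ i : Fin d,
      fderiv ℝ (fun y => fderiv ℝ (V d m D) y (EuclideanSpace.single i 1)) x
        (EuclideanSpace.single i 1)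
      = -p * (D + c * ‖x‖ ^ 2) ^ (-p - 1) * (c * 2)
        + (-p * ((-p - 1) * (D + c * ‖x‖ ^ 2) ^ (-p - 1 - 1)) * (c * 2) * (c * 2)) * (x i) ^ 2 := by
    intro i
    rw [hGi i]
    have h1 := (hBd x).rpow_const (p := -p - 1) (Or.inl (hB x).ne')
    have h2 := (h1.const_mul (-p)).mul_const (c * 2)
    have hco : HasFDerivAt (fun y : EuclideanSpace ℝ (Fin d) => (y i : ℝ))
        (EuclideanSpace.proj i : EuclideanSpace ℝ (Fin d) →L[ℝ] ℝ) x :=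
      (EuclideanSpace.proj i : EuclideanSpace ℝ (Fin d) →L[ℝ] ℝ).hasFDerivAt
    have h3 := h2.mul hco
    change HasFDerivAt (fun y : EuclideanSpace ℝ (Fin d) =>
      -p * (D + c * ‖y‖ ^ 2) ^ (-p - 1) * (c * 2) * y i) _ x at h3
    rw [h3.fderiv]
    rw [ContinuousLinearMap.add_apply, ContinuousLinearMap.smul_apply,
      ContinuousLinearMap.smul_apply]
    simp [EuclideanSpace.inner_single_right, EuclideanSpace.single_apply]
    ring
  have hns : ‖x‖ ^ 2 = ∑ i, x i ^ 2 := by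
    rw [EuclideanSpace.norm_eq, Real.sq_sqrt (by positivity)]
    simp [Real.norm_eq_abs, sq_abs]
  have hlapsum : lap d (V d m D) x
      = (d:ℝ) * (-p * (D + c * ‖x‖ ^ 2) ^ (-p - 1) * (c * 2))
        + (-p * ((-p - 1) * (D + c * ‖x‖ ^ 2) ^ (-p - 1 - 1)) * (c * 2) * (c * 2)) * ‖x‖ ^ 2 := by
    unfold lap
    rw [Finset.sum_congr rfl fun i _ => hpart i, Finset.sum_add_distrib, Finset.sum_const,
      ← Finset.mul_sum, ← hns]
    simp [nsmul_eq_mul]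
  have hgrad : gradient (V d m D) x
      = (-p * (D + c * ‖x‖ ^ 2) ^ (-p - 1) * (c * 2)) • x := by
    apply HasGradientAt.gradient
    rw [hasGradientAt_iff_hasFDerivAt]
    refine (hVd x).congr_fderiv ?_
    ext v
    simp [InnerProductSpace.toDual_apply_apply, real_inner_smul_left]
  -- abbreviations for the algebra
  set q : ℝ := ‖x‖ ^ 2 with hq_def
  have hq0 : 0 ≤ q := by rw [hq_def]; positivity
  set Bx : ℝ := D + c * q with hBx_def
  have hBx : 0 < Bx := hB x
  set u : ℝ := Bx ^ (-p - 2) with hu_def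
  have hu : 0 < u := by rw [hu_def]; positivity
  have hu1 : Bx ^ (-p - 1) = u * Bx := by
    rw [hu_def, show -p - 1 = (-p - 2) + 1 by ring, Real.rpow_add hBx, Real.rpow_one]
  have hu2 : Bx ^ (-p) = u * Bx ^ 2 := by
    rw [hu_def, ← Real.rpow_natCast Bx 2, ← Real.rpow_add hBx]
    norm_num
  set S : ℝ := (d:ℝ) * D + c * p * K * q with hS_def
  have hS0 : 0 < S := by
    have h1 : (0:ℝ) < (d:ℝ) * D := by positivity
    have h2 : (0:ℝ) ≤ c * p * K * q := by positivity
    rw [hS_def]; linarith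
  have hdS : (d:ℝ) - 2 * p - 2 = p * K := by
    rw [hKeq, hp_def]; field_simp; ring
  have hlapval : lap d (V d m D) x = -(1 / m * (u * S)) := by
    rw [hlapsum, hu1, hS_def, hBx_def]
    have e1 : -p - 1 - 1 = -p - 2 := by ring
    rw [e1, ← hu_def]
    linear_combination (-((d:ℝ) * u * D) - c * u * p * K * q) * h2pc - (2 * p * c ^ 2 * u * q) * hdS
  have hlapabs : |lap d (V d m D) x| = 1 / m * (u * S) := by
    rw [hlapval, abs_neg, abs_of_pos]
    exact mul_pos (one_div_pos.mpr hm0) (mul_pos hu hS0)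
  have hVx2m : V d m D x ^ (2 - m : ℝ) = u * Bx := by
    rw [hVeq x, ← hq_def, ← hBx_def, ← Real.rpow_mul hBx.le,
      show (-p) * (2 - m) = -p - 1 from by linear_combination (-1 : ℝ) * hpm, hu1]
  have hVxval : V d m D x = u * Bx ^ 2 := by
    rw [hVeq x, ← hq_def, ← hBx_def, hu2]
  have hgn : ‖gradient (V d m D) x‖ ^ 2 = 1 / m ^ 2 * (u ^ 2 * Bx ^ 2 * q) := by
    rw [hgrad, norm_smul, mul_pow, Real.norm_eq_abs, sq_abs, ← hq_def, hu1]
    linear_combination ((2 * p * c + 1 / m) * u ^ 2 * Bx ^ 2 * q) * h2pc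
  constructor
  · rw [hlapabs, hVx2m]
    have he : 1 / m * (u * S) / (u * Bx) = S / (m * Bx) := by
      field_simp
    rw [he, div_le_div_iff₀ (by positivity) (mul_pos hm0 hBx)]
    have hkey : K * Bx ≤ (1 - m) * S := by
      have he2 : (1 - m) * S - K * Bx = (4 - 2 * m) * D := by
        rw [hS_def, hBx_def]
        linear_combination (c * K * q) * hpm - D * hKeq
      nlinarith [hD]
    nlinarith [mul_le_mul_of_nonneg_left hkey hm0.le]
  · rw [hgn, hlapabs, hVxval]
    have he : 1 / m ^ 2 * (u ^ 2 * Bx ^ 2 * q) / (1 / m * (u * S) * (u * Bx ^ 2))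
        = q / (m * S) := by
      field_simp
    rw [he, div_le_div_iff₀ (mul_pos hm0 hS0) hK]
    have he2 : 2 * m * S - q * K = 2 * m * (d:ℝ) * D := by
      rw [hS_def]
      linear_combination (K * q) * h2mcp
    have h3 : (0:ℝ) ≤ 2 * m * (d:ℝ) * D := by positivity
    linarith
end
end
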